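/- Let α be an algebraic number of degree D over ℚ with (absolute logarithmic Weil) height h(α). Then for every nonzero polynomial P ∈ ℤ[z] of degree d with P(α) ≠ 0, one has log|P(α)| ≥ -D·d·h(α) - (D-1)·log‖P‖ - D·log(d+1), where ‖P‖ denotes the maximum of the absolute values of the coefficients of P. -/

import Mathlib

/-- The height of an integer polynomial: the maximum of the absolute values of
its coefficients. -/
noncomputable def polyHeightZ (P : Polynomial ℤ) : ℕ :=
  P.support.sup fun i => (P.coeff i).natAbs

/-- The Mahler measure of a complex polynomial:
`|leading coefficient| * ∏ max (1, |root|)`. -/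
noncomputable def mahlerMeasureC (q : Polynomial ℂ) : ℝ :=
  ‖q.leadingCoeff‖ * ((q.roots.map fun r => max 1 ‖r‖).prod)

open MvPolynomial AddMonoidAlgebra Finset

namespace LiouAux

variable {n : ℕ}

/-- per-variable degree bound on the support of a multivariate polynomial -/
def Bnd (d : ℕ) (p : MvPolynomial (Fin n) ℤ) : Prop :=
  ∀ μ ∈ p.support, ∀ i, μ i ≤ d

lemma Bnd.mono {c d : ℕ} {p : MvPolynomial (Fin n) ℤ} (h : Bnd c p) (hcd : c ≤ d) :
    Bnd d p := fun μ hμ i => (h μ hμ i).trans hcd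

lemma bnd_mul {c e : ℕ} {p q : MvPolynomial (Fin n) ℤ} (hp : Bnd c p) (hq : Bnd e q) :
    Bnd (c + e) (p * q) := by
  intro μ hμ i
  have := MvPolynomial.support_mul p q hμ
  rw [Finset.mem_add] at this
  obtain ⟨μ₁, h₁, μ₂, h₂, rfl⟩ := this
  exact add_le_add (hp μ₁ h₁ i) (hq μ₂ h₂ i)

lemma bnd_pow {p : MvPolynomial (Fin n) ℤ} (hp : Bnd 1 p) (k : ℕ) : Bnd k (p ^ k) := by
  induction k with
  | zero =>
    intro μ hμ i
    rw [pow_zero, ← MvPolynomial.C_1, MvPolynomial.C_apply] at hμ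
    have := MvPolynomial.support_monomial_subset hμ
    rw [Finset.mem_singleton] at this
    simp [this]
  | succ k ih =>
    have := bnd_mul ih hp
    simpa [pow_succ] using this

lemma prod_X_eq_monomial (A : Finset (Fin n)) :
    (∏ i ∈ A, (X i : MvPolynomial (Fin n) ℤ)) = monomial (∑ i ∈ A, Finsupp.single i 1) 1 := by
  induction A using Finset.induction with
  | empty => simp [MvPolynomial.monomial_zero']
  | insert a A hA ih =>
    rw [Finset.prod_insert hA, Finset.sum_insert hA, ih, MvPolynomial.X,
      MvPolynomial.monomial_mul, one_mul]

lemma bnd_esymm (k : ℕ) : Bnd 1 (esymm (Fin n) ℤ k) := by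
  intro μ hμ i
  rw [esymm] at hμ
  obtain ⟨A, hA, hmem⟩ := Finset.mem_biUnion.mp (MvPolynomial.support_sum hμ)
  rw [prod_X_eq_monomial] at hmem
  have := MvPolynomial.support_monomial_subset hmem
  rw [Finset.mem_singleton] at this
  subst this
  rw [Finsupp.finset_sum_apply]
  simp_rw [Finsupp.single_apply]
  rw [Finset.sum_ite_eq' A i (fun _ => 1)]
  split <;> simp

lemma bnd_esymmAlgHomMonomial (t : Fin n →₀ ℕ) (r : ℤ) :
    Bnd (t.sum fun _ e => e) (esymmAlgHomMonomial (Fin n) t r) := by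
  induction t using Finsupp.induction₂ with
  | zero =>
    rw [esymmAlgHom_zero]
    intro μ hμ i
    rw [MvPolynomial.C_apply] at hμ
    have := MvPolynomial.support_monomial_subset hμ
    rw [Finset.mem_singleton] at this
    simp [this]
  | add_single i b t hit hb ih =>
    rw [esymmAlgHomMonomial_add]
    have h2 : Bnd b (esymmAlgHomMonomial (Fin n) (Finsupp.single i b) 1) := by
      rw [esymmAlgHomMonomial_single_one]
      exact bnd_pow (bnd_esymm _) b
    have := bnd_mul ih h2
    have hsum : (t + Finsupp.single i b).sum (fun _ e => e)
        = (t.sum fun _ e => e) + b := by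
      rw [Finsupp.sum_add_index (by simp) (by simp), Finsupp.sum_single_index rfl]
    rw [hsum]
    exact this


/-- Degree-aware fundamental theorem of symmetric polynomials over ℤ. -/
lemma exists_esymm_rep (d : ℕ) :
    ∀ (s : Lex (Fin n →₀ ℕ)) (p : MvPolynomial (Fin n) ℤ), p.supDegree toLex = s →
    p.IsSymmetric → Bnd d p →
    ∃ F : MvPolynomial (Fin n) ℤ, F.totalDegree ≤ d ∧
      aeval (fun i : Fin n => esymm (Fin n) ℤ ((i : ℕ) + 1)) F = p := by
  intro s
  induction s using WellFoundedLT.induction with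
  | _ s ih =>
  intro p hs hp hb
  obtain rfl | h0 := eq_or_ne p 0
  · exact ⟨0, by simp, by simp⟩
  subst hs
  have hlc : p.leadingCoeff toLex ≠ 0 := by
    rwa [Ne, leadingCoeff_eq_zero toLex.injective]
  set t := Finsupp.equivFunOnFinite.symm (Fin.invAccumulate n n <| ↑(ofLex <| p.supDegree toLex))
    with ht
  have hacc : Fin.accumulate n n ↑t = ↑(ofLex <| p.supDegree toLex) :=
    Fin.accumulate_invAccumulate le_rfl hp.antitone_supDegree
  have hd : (esymmAlgHomMonomial _ t <| p.leadingCoeff toLex).supDegree toLex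
      = p.supDegree toLex := by
    rw [← ofLex_inj, DFunLike.ext'_iff, supDegree_esymmAlgHomMonomial hlc t le_rfl]
    exact hacc
  -- the support element corresponding to supDegree
  have hmem : ofLex (p.supDegree toLex) ∈ p.support := by
    have h1 := supDegree_mem_support toLex.injective (p := p) h0
    have h2 : Function.invFun ⇑toLex (p.supDegree toLex) = ofLex (p.supDegree toLex) := by
      apply toLex.injective
      exact Function.invFun_eq ⟨ofLex (p.supDegree toLex), rfl⟩
    rwa [h2] at h1
  have hts : (t.sum fun _ e => e) ≤ d := by
    rcases Nat.eq_zero_or_pos n with hn | hn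
    · subst hn
      rw [Finsupp.sum_fintype _ _ (fun _ => rfl)]
      simp
    · have hkey := congrFun hacc ⟨0, hn⟩
      rw [Fin.accumulate_apply] at hkey
      have : (Finset.univ.filter fun i : Fin n => (0:ℕ) ≤ (i:ℕ)) = Finset.univ := by
        apply Finset.filter_true_of_mem; intro i _; exact Nat.zero_le _
      rw [this] at hkey
      have hsum : (t.sum fun _ e => e) = ∑ i : Fin n, t i :=
        Finsupp.sum_fintype _ _ (fun _ => rfl)
      rw [hsum, hkey]
      exact hb _ hmem ⟨0, hn⟩
  have hbg : Bnd d (esymmAlgHomMonomial (Fin n) t (p.leadingCoeff toLex)) :=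
    (bnd_esymmAlgHomMonomial t _).mono hts
  have haev : aeval (fun i : Fin n => esymm (Fin n) ℤ ((i : ℕ) + 1)) (monomial t
      (p.leadingCoeff toLex)) = esymmAlgHomMonomial (Fin n) t (p.leadingCoeff toLex) := by
    rw [esymmAlgHomMonomial, esymmAlgHom_apply]
  obtain he | hne := eq_or_ne p (esymmAlgHomMonomial _ t <| p.leadingCoeff toLex)
  · refine ⟨monomial t (p.leadingCoeff toLex), ?_, by rw [haev, ← he]⟩
    rw [MvPolynomial.totalDegree_monomial _ hlc]
    exact hts
  have hlt := (supDegree_sub_lt_of_leadingCoeff_eq toLex.injective hd.symm ?_).resolve_right hne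
  · have hsym : (p - esymmAlgHomMonomial _ t (p.leadingCoeff toLex)).IsSymmetric :=
      hp.sub (isSymmetric_esymmAlgHomMonomial _ _)
    have hbnd : Bnd d (p - esymmAlgHomMonomial _ t (p.leadingCoeff toLex)) := by
      intro μ hμ i
      rcases Finset.mem_union.mp (MvPolynomial.support_sub _ _ _ hμ) with h | h
      · exact hb μ h i
      · exact hbg μ h i
    obtain ⟨F, hF1, hF2⟩ := ih _ hlt _ rfl hsym hbnd
    refine ⟨F + monomial t (p.leadingCoeff toLex), ?_, ?_⟩
    · refine (MvPolynomial.totalDegree_add _ _).trans ?_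
      rw [sup_le_iff]
      exact ⟨hF1, by rw [MvPolynomial.totalDegree_monomial _ hlc]; exact hts⟩
    · rw [map_add, hF2, haev, sub_add_cancel]
  · rw [leadingCoeff_esymmAlgHomMonomial t le_rfl]


/-- evaluating an ℤ-mv-polynomial of total degree ≤ d at points `v` with `a * v k` integral,
after multiplying by `a ^ d`, gives an integer. -/
lemma exists_int {D : ℕ} (d : ℕ) (a : ℤ) (c : Fin D → ℤ) (v : Fin D → ℂ)
    (hv : ∀ k, (a : ℂ) * v k = (c k : ℂ)) (F : MvPolynomial (Fin D) ℤ)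
    (hF : F.totalDegree ≤ d) :
    ∃ m : ℤ, (m : ℂ) = (a : ℂ) ^ d * MvPolynomial.aeval v F := by
  use ∑ μ ∈ F.support, (MvPolynomial.coeff μ F) * a ^ (d - μ.sum fun _ e => e) *
     ∏ i ∈ μ.support, c i ^ μ i
  have hev : MvPolynomial.aeval v F = ∑ μ ∈ F.support,
      (Int.cast (MvPolynomial.coeff μ F) : ℂ) * ∏ i ∈ μ.support, v i ^ μ i := by
    rw [MvPolynomial.aeval_def, MvPolynomial.eval₂_eq]
    simp [algebraMap_int_eq, eq_intCast]
  rw [hev, Finset.mul_sum]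
  push_cast
  apply Finset.sum_congr rfl
  intro μ hμ
  have hs : (μ.sum fun _ e => e) ≤ d := (MvPolynomial.le_totalDegree hμ).trans hF
  have h1 : (a : ℂ) ^ (∑ i ∈ μ.support, μ i) * ∏ i ∈ μ.support, v i ^ μ i
      = ∏ i ∈ μ.support, (c i : ℂ) ^ μ i := by
    rw [← Finset.prod_pow_eq_pow_sum, ← Finset.prod_mul_distrib]
    exact Finset.prod_congr rfl fun i _ => by rw [← mul_pow, hv]
  have h2 : (a : ℂ) ^ d = (a : ℂ) ^ (d - μ.sum fun _ e => e) * (a : ℂ) ^ (∑ i ∈ μ.support, μ i) := by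
    rw [← pow_add]
    congr 1
    have : (μ.sum fun _ e => e) = ∑ i ∈ μ.support, μ i := rfl
    omega
  rw [h2, ← h1]
  ring

/-- the product of `P(x_i)` as a multivariate polynomial -/
noncomputable def Sprod (D : ℕ) (P : Polynomial ℤ) : MvPolynomial (Fin D) ℤ :=
  ∏ i : Fin D, Polynomial.aeval (X i) P

lemma Sprod_isSymmetric (D : ℕ) (P : Polynomial ℤ) : (Sprod D P).IsSymmetric := by
  intro e
  rw [Sprod, map_prod]
  have : ∀ i : Fin D, rename e (Polynomial.aeval (X i) P)
      = Polynomial.aeval (X (e i) : MvPolynomial (Fin D) ℤ) P := by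
    intro i
    rw [← Polynomial.aeval_algHom_apply (rename e) (X i) P, rename_X]
  refine (Finset.prod_congr rfl fun i _ => this i).trans ?_
  exact Equiv.prod_comp e (fun j => Polynomial.aeval (X j) P)

lemma bnd_prod {ι : Type*} (s : Finset ι) (f : ι → MvPolynomial (Fin n) ℤ) (b : ι → Fin n → ℕ)
    (hf : ∀ i ∈ s, ∀ μ ∈ (f i).support, ∀ j, μ j ≤ b i j) :
    ∀ μ ∈ (∏ i ∈ s, f i).support, ∀ j, μ j ≤ ∑ i ∈ s, b i j := by
  classical
  induction s using Finset.induction with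
  | empty =>
    intro μ hμ j
    rw [Finset.prod_empty, ← MvPolynomial.C_1, MvPolynomial.C_apply] at hμ
    have := MvPolynomial.support_monomial_subset hμ
    rw [Finset.mem_singleton] at this
    simp [this]
  | @insert a A hA ih =>
    intro μ hμ j
    rw [Finset.prod_insert hA] at hμ
    obtain ⟨μ₁, h₁, μ₂, h₂, rfl⟩ := Finset.mem_add.mp (MvPolynomial.support_mul _ _ hμ)
    rw [Finset.sum_insert hA]
    exact add_le_add (hf a (Finset.mem_insert_self a A) μ₁ h₁ j)
      (ih (fun i hi => hf i (Finset.mem_insert_of_mem hi)) μ₂ h₂ j)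

lemma bnd_Sprod (D d : ℕ) (P : Polynomial ℤ) (hP : P.natDegree ≤ d) : Bnd d (Sprod D P) := by
  intro μ hμ j
  have hfac : ∀ i ∈ Finset.univ, ∀ μ ∈ (Polynomial.aeval (X i) P : MvPolynomial (Fin D) ℤ).support,
      ∀ j, μ j ≤ (fun (i j : Fin D) => if j = i then d else 0) i j := by
    intro i _ μ hμ j
    show μ j ≤ if j = i then d else 0
    have hrep : (Polynomial.aeval (X i) P : MvPolynomial (Fin D) ℤ)
        = ∑ k ∈ P.support, monomial (Finsupp.single i k) (P.coeff k) := by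
      rw [Polynomial.aeval_def, Polynomial.eval₂_eq_sum, Polynomial.sum_def]
      apply Finset.sum_congr rfl
      intro k _
      rw [algebraMap_eq, MvPolynomial.X_pow_eq_monomial, MvPolynomial.C_mul_monomial, mul_one]
    rw [hrep] at hμ
    obtain ⟨k, hk, hmem⟩ := Finset.mem_biUnion.mp (MvPolynomial.support_sum hμ)
    have := MvPolynomial.support_monomial_subset hmem
    rw [Finset.mem_singleton] at this
    subst this
    rw [Finsupp.single_apply]
    split
    · rename_i hji
      rw [if_pos hji.symm]
      exact (Polynomial.le_natDegree_of_mem_supp k hk).trans hP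
    · rename_i hji
      rw [if_neg (fun h => hji h.symm)]
  have hle := bnd_prod Finset.univ _ _ hfac μ hμ j
  calc μ j ≤ ∑ i : Fin D, (if j = i then d else 0) := hle
    _ ≤ d := by rw [Finset.sum_ite_eq Finset.univ j (fun _ => d)]; split <;> simp

lemma aeval_Sprod {D : ℕ} (P : Polynomial ℤ) (f : Fin D → ℂ) :
    MvPolynomial.aeval f (Sprod D P) = ∏ i : Fin D, Polynomial.aeval (f i) P := by
  rw [Sprod, map_prod]
  apply Finset.prod_congr rfl
  intro i _
  rw [← Polynomial.aeval_algHom_apply (MvPolynomial.aeval f) (X i) P, MvPolynomial.aeval_X]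


lemma intCast_injective' : Function.Injective ⇑(Int.castRingHom ℂ) :=
  Int.cast_injective

/-- The key arithmetic input: `lead(q)^d * ∏_{q(r)=0} P(r)` is an integer. -/
lemma key_int (D d : ℕ) (q P : Polynomial ℤ) (hq0 : q ≠ 0)
    (hqdeg : q.natDegree = D) (hPdeg : P.natDegree ≤ d) :
    ∃ m : ℤ, (m : ℂ) = ((q.leadingCoeff : ℤ) : ℂ) ^ d *
      (((q.map (Int.castRingHom ℂ)).roots.map (fun r => Polynomial.aeval r P)).prod) := by
  set qC := q.map (Int.castRingHom ℂ) with hqC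
  have hqC0 : qC ≠ 0 := (Polynomial.map_ne_zero_iff intCast_injective').mpr hq0
  have hdegC : qC.natDegree = D := by
    rw [hqC, Polynomial.natDegree_map_eq_of_injective intCast_injective', hqdeg]
  have hsp : qC.Splits := IsAlgClosed.splits qC
  have hcard : Multiset.card qC.roots = D := by
    rw [← hdegC]; exact Polynomial.splits_iff_card_roots.mp hsp
  -- enumerate the roots
  set l := qC.roots.toList with hl
  have hlen : l.length = D := by rw [hl, Multiset.length_toList, hcard]
  set f : Fin D → ℂ := fun i => l.get (Fin.cast hlen.symm i) with hf
  have hlist : Multiset.map f Finset.univ.val = qC.roots := by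
    rw [Fin.univ_val_map]
    have hofn : List.ofFn f = l := by
      apply List.ext_getElem
      · simp [hlen]
      · intro i h1 h2
        simp [hf]
    rw [hofn, hl, Multiset.coe_toList]
  set a := q.leadingCoeff with ha
  have hlead : qC.leadingCoeff = (a : ℂ) := by
    rw [Polynomial.leadingCoeff, hdegC, ← hqdeg, hqC, Polynomial.coeff_map, ha]
    simp
  set c : Fin D → ℤ := fun k => (-1 : ℤ) ^ ((k : ℕ) + 1) * q.coeff (D - ((k : ℕ) + 1)) with hc
  have hval : ∀ k : Fin D, (a : ℂ) * qC.roots.esymm ((k : ℕ) + 1) = ((c k : ℤ) : ℂ) := by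
    intro k
    have hkD : (k : ℕ) + 1 ≤ D := Nat.succ_le_of_lt k.2
    have h2 := Polynomial.coeff_eq_esymm_roots_of_card (hcard.trans hdegC.symm)
      (k := D - ((k : ℕ) + 1)) (by rw [hdegC]; omega)
    rw [hdegC, Nat.sub_sub_self hkD, hlead] at h2
    have h3 : qC.coeff (D - ((k : ℕ) + 1)) = ((q.coeff (D - ((k : ℕ) + 1)) : ℤ) : ℂ) := by
      rw [hqC, Polynomial.coeff_map]; simp
    have hsq : ((-1 : ℂ) ^ ((k : ℕ) + 1)) * ((-1 : ℂ) ^ ((k : ℕ) + 1)) = 1 := by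
      rw [← mul_pow]; norm_num
    calc (a : ℂ) * qC.roots.esymm ((k : ℕ) + 1)
        = ((-1 : ℂ) ^ ((k : ℕ) + 1)) * ((-1 : ℂ) ^ ((k : ℕ) + 1)) *
          ((a : ℂ) * qC.roots.esymm ((k : ℕ) + 1)) := by rw [hsq, one_mul]
      _ = ((-1 : ℂ) ^ ((k : ℕ) + 1)) * ((a : ℂ) * (-1 : ℂ) ^ ((k : ℕ) + 1) *
            qC.roots.esymm ((k : ℕ) + 1)) := by ring
      _ = ((-1 : ℂ) ^ ((k : ℕ) + 1)) * qC.coeff (D - ((k : ℕ) + 1)) := by rw [← h2]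
      _ = ((c k : ℤ) : ℂ) := by rw [h3, hc]; push_cast; ring
  obtain ⟨F, hFdeg, hFrep⟩ := exists_esymm_rep d _ (Sprod D P) rfl
    (Sprod_isSymmetric D P) (bnd_Sprod D d P hPdeg)
  obtain ⟨m, hm⟩ := exists_int d a c (fun k : Fin D => qC.roots.esymm ((k : ℕ) + 1)) hval F hFdeg
  refine ⟨m, ?_⟩
  rw [hm]
  congr 1
  have hcomp : MvPolynomial.aeval (fun k : Fin D => qC.roots.esymm ((k : ℕ) + 1)) F
      = MvPolynomial.aeval f (Sprod D P) := by
    rw [← hFrep]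
    have hc2 := MvPolynomial.comp_aeval
      (fun i : Fin D => esymm (Fin D) ℤ ((i : ℕ) + 1)) (MvPolynomial.aeval f)
    have happ := AlgHom.congr_fun hc2 F
    rw [AlgHom.comp_apply] at happ
    rw [happ]
    have hfun : (fun i : Fin D => MvPolynomial.aeval f (esymm (Fin D) ℤ ((i : ℕ) + 1)))
        = fun k : Fin D => qC.roots.esymm ((k : ℕ) + 1) := by
      funext i
      rw [MvPolynomial.aeval_esymm_eq_multiset_esymm, hlist]
    rw [hfun]
  rw [hcomp, aeval_Sprod]
  rw [← hlist, Multiset.map_map, Finset.prod_eq_multiset_prod]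
  simp [Function.comp]


lemma ratCast_injective' : Function.Injective ⇑(Int.castRingHom ℚ) :=
  Int.cast_injective

lemma aeval_map_ratC (x : ℂ) (P : Polynomial ℤ) :
    Polynomial.aeval x (P.map (Int.castRingHom ℚ)) = Polynomial.aeval x P := by
  rw [← algebraMap_int_eq, Polynomial.aeval_map_algebraMap]

lemma comp_cast_eq : (algebraMap ℚ ℂ).comp (Int.castRingHom ℚ) = Int.castRingHom ℂ := by
  ext x
  simp

/-- the degree-minimality over `ℤ` transfers to `ℚ`. -/
lemma min_deg_rat (α : ℂ) (D : ℕ)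
    (hqmin : ∀ q' : Polynomial ℤ, q' ≠ 0 → Polynomial.aeval α q' = 0 → D ≤ q'.natDegree)
    (u : Polynomial ℚ) (hu0 : u ≠ 0) (huα : Polynomial.aeval α u = 0) :
    D ≤ u.natDegree := by
  set u' := IsLocalization.integerNormalization (nonZeroDivisors ℤ) u with hu'
  have hu'0 : u' ≠ 0 := fun h => hu0 (IsFractionRing.integerNormalization_eq_zero_iff.mp h)
  have hu'α : Polynomial.aeval α u' = 0 :=
    IsLocalization.integerNormalization_aeval_eq_zero (nonZeroDivisors ℤ) u huα
  refine (hqmin u' hu'0 hu'α).trans ?_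
  obtain ⟨b, hb⟩ := IsLocalization.integerNormalization_spec (nonZeroDivisors ℤ) u
  rw [Polynomial.natDegree_le_iff_coeff_eq_zero]
  intro N hN
  have h1 : u.coeff N = 0 := Polynomial.coeff_eq_zero_of_natDegree_lt hN
  have h2 := congrArg (fun p => Polynomial.coeff p N) hb.2
  simp only [Polynomial.coeff_map, Polynomial.coeff_smul] at h2
  rw [h1, smul_zero] at h2
  refine ratCast_injective' (?_ : (Int.castRingHom ℚ) (u'.coeff N) = (Int.castRingHom ℚ) 0)
  rw [map_zero, ← algebraMap_int_eq]
  exact h2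

lemma qQ_irred (α : ℂ) (D : ℕ) (hD : 0 < D) (q : Polynomial ℤ) (hq0 : q ≠ 0)
    (hqroot : Polynomial.aeval α q = 0) (hqdeg : q.natDegree = D)
    (hqmin : ∀ q' : Polynomial ℤ, q' ≠ 0 → Polynomial.aeval α q' = 0 → D ≤ q'.natDegree) :
    Irreducible (q.map (Int.castRingHom ℚ)) := by
  set qQ := q.map (Int.castRingHom ℚ) with hqQ
  have hqQ0 : qQ ≠ 0 := (Polynomial.map_ne_zero_iff ratCast_injective').mpr hq0
  have hdegQ : qQ.natDegree = D := by
    rw [hqQ, Polynomial.natDegree_map_eq_of_injective ratCast_injective', hqdeg]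
  have hqQα : Polynomial.aeval α qQ = 0 := by rw [hqQ, aeval_map_ratC, hqroot]
  constructor
  · exact Polynomial.not_isUnit_of_natDegree_pos _ (by omega)
  · intro f g hfg
    by_contra hcon
    push_neg at hcon
    obtain ⟨hf, hg⟩ := hcon
    have hf0 : f ≠ 0 := by rintro rfl; rw [zero_mul] at hfg; exact hqQ0 hfg
    have hg0 : g ≠ 0 := by rintro rfl; rw [mul_zero] at hfg; exact hqQ0 hfg
    have hfd : f.natDegree ≠ 0 := fun h => hf (Polynomial.isUnit_iff_degree_eq_zero.mpr
      (by rw [Polynomial.degree_eq_natDegree hf0, h]; rfl))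
    have hgd : g.natDegree ≠ 0 := fun h => hg (Polynomial.isUnit_iff_degree_eq_zero.mpr
      (by rw [Polynomial.degree_eq_natDegree hg0, h]; rfl))
    have hsum : f.natDegree + g.natDegree = D := by
      rw [← hdegQ, hfg, Polynomial.natDegree_mul hf0 hg0]
    have hroot : Polynomial.aeval α f * Polynomial.aeval α g = 0 := by
      rw [← map_mul, ← hfg]; exact hqQα
    rcases mul_eq_zero.mp hroot with hfα | hgα
    · have := min_deg_rat α D hqmin f hf0 hfα; omega
    · have := min_deg_rat α D hqmin g hg0 hgα; omega

lemma roots_nonvanish (α : ℂ) (D : ℕ) (hD : 0 < D) (q : Polynomial ℤ) (hq0 : q ≠ 0)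
    (hqroot : Polynomial.aeval α q = 0) (hqdeg : q.natDegree = D)
    (hqmin : ∀ q' : Polynomial ℤ, q' ≠ 0 → Polynomial.aeval α q' = 0 → D ≤ q'.natDegree)
    (P : Polynomial ℤ) (hPα : Polynomial.aeval α P ≠ 0) :
    ∀ r ∈ (q.map (Int.castRingHom ℂ)).roots, Polynomial.aeval r P ≠ 0 := by
  intro r hr hPr
  set qQ := q.map (Int.castRingHom ℚ) with hqQ
  have hirr := qQ_irred α D hD q hq0 hqroot hqdeg hqmin
  have hmap : qQ.map (algebraMap ℚ ℂ) = q.map (Int.castRingHom ℂ) := by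
    rw [hqQ, Polynomial.map_map, comp_cast_eq]
  have hqQr : Polynomial.aeval r qQ = 0 := by
    rw [Polynomial.aeval_def, Polynomial.eval₂_eq_eval_map, hmap]
    exact (Polynomial.mem_roots'.mp hr).2
  have hPQr : Polynomial.aeval r (P.map (Int.castRingHom ℚ)) = 0 := by
    rw [aeval_map_ratC]; exact hPr
  have hdvd : qQ ∣ P.map (Int.castRingHom ℚ) := by
    by_contra hnd
    obtain ⟨u, v, huv⟩ := (hirr.coprime_iff_not_dvd.mpr hnd)
    have := congrArg (Polynomial.aeval r) huv
    rw [map_add, map_mul, map_mul, hqQr, hPQr, mul_zero, mul_zero, add_zero, map_one] at this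
    exact zero_ne_one this
  obtain ⟨s, hs⟩ := hdvd
  apply hPα
  rw [← aeval_map_ratC α P, hs, map_mul]
  have hqQα : Polynomial.aeval α qQ = 0 := by rw [hqQ, aeval_map_ratC, hqroot]
  rw [hqQα, zero_mul]


lemma ms_prod_nonneg (s : Multiset ℝ) (h : ∀ x ∈ s, 0 ≤ x) : 0 ≤ s.prod := by
  induction s using Multiset.induction with
  | empty => simp
  | cons a t ih =>
    rw [Multiset.prod_cons]
    exact mul_nonneg (h a (Multiset.mem_cons_self a t))
      (ih fun x hx => h x (Multiset.mem_cons_of_mem hx))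

lemma ms_one_le_prod (s : Multiset ℝ) (h : ∀ x ∈ s, 1 ≤ x) : 1 ≤ s.prod := by
  induction s using Multiset.induction with
  | empty => simp
  | cons a t ih =>
    rw [Multiset.prod_cons]
    have ha := h a (Multiset.mem_cons_self a t)
    have ht := ih fun x hx => h x (Multiset.mem_cons_of_mem hx)
    nlinarith

lemma ms_prod_le_prod {α : Type*} (s : Multiset α) (f g : α → ℝ)
    (h0 : ∀ x ∈ s, 0 ≤ f x) (h : ∀ x ∈ s, f x ≤ g x) :
    (s.map f).prod ≤ (s.map g).prod := by
  induction s using Multiset.induction with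
  | empty => simp
  | cons a t ih =>
    rw [Multiset.map_cons, Multiset.map_cons, Multiset.prod_cons, Multiset.prod_cons]
    have h0a := h0 a (Multiset.mem_cons_self a t)
    have ha := h a (Multiset.mem_cons_self a t)
    have hft : 0 ≤ (Multiset.map f t).prod := by
      apply ms_prod_nonneg
      intro x hx
      obtain ⟨y, hy, rfl⟩ := Multiset.mem_map.mp hx
      exact h0 y (Multiset.mem_cons_of_mem hy)
    have hind := ih (fun x hx => h0 x (Multiset.mem_cons_of_mem hx))
      (fun x hx => h x (Multiset.mem_cons_of_mem hx))
    exact mul_le_mul ha hind hft (le_trans h0a ha)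

lemma one_le_polyHeight (P : Polynomial ℤ) (hP : P ≠ 0) : 1 ≤ polyHeightZ P := by
  obtain ⟨i, hi⟩ : P.support.Nonempty := Polynomial.support_nonempty.mpr hP
  have h1 : 1 ≤ (P.coeff i).natAbs := by
    have := Polynomial.mem_support_iff.mp hi
    omega
  refine h1.trans ?_
  unfold polyHeightZ
  exact Finset.le_sup (f := fun i => (P.coeff i).natAbs) hi

lemma coeff_abs_le (P : Polynomial ℤ) (i : ℕ) : |(P.coeff i : ℝ)| ≤ (polyHeightZ P : ℝ) := by
  by_cases h : P.coeff i = 0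
  · simp [h]
  · have hi : i ∈ P.support := Polynomial.mem_support_iff.mpr h
    have hle : (P.coeff i).natAbs ≤ polyHeightZ P := by
      unfold polyHeightZ
      exact Finset.le_sup (f := fun i => (P.coeff i).natAbs) hi
    calc |(P.coeff i : ℝ)| = (((P.coeff i).natAbs : ℕ) : ℝ) :=
          by rw [Nat.cast_natAbs, Int.cast_abs]
      _ ≤ (polyHeightZ P : ℝ) := by exact_mod_cast hle

lemma aeval_abs_le (P : Polynomial ℤ) (d : ℕ) (hd : P.natDegree ≤ d) (r : ℂ) :
    ‖Polynomial.aeval r P‖ ≤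
      ((d : ℝ) + 1) * (polyHeightZ P : ℝ) * max 1 (‖r‖) ^ d := by
  have hev : Polynomial.aeval r P = (P.map (Int.castRingHom ℂ)).eval r := by
    rw [Polynomial.aeval_def, algebraMap_int_eq, Polynomial.eval₂_eq_eval_map]
  have hdeg : (P.map (Int.castRingHom ℂ)).natDegree = P.natDegree :=
    Polynomial.natDegree_map_eq_of_injective intCast_injective' P
  rw [hev, Polynomial.eval_eq_sum_range]
  refine (norm_sum_le _ _).trans ?_
  have hterm : ∀ i ∈ Finset.range ((P.map (Int.castRingHom ℂ)).natDegree + 1),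
      ‖(P.map (Int.castRingHom ℂ)).coeff i * r ^ i‖ ≤
        (polyHeightZ P : ℝ) * max 1 (‖r‖) ^ d := by
    intro i hi
    rw [norm_mul, norm_pow]
    have h1 : ‖(P.map (Int.castRingHom ℂ)).coeff i‖ ≤ (polyHeightZ P : ℝ) := by
      rw [Polynomial.coeff_map]
      rw [show ((Int.castRingHom ℂ) (P.coeff i)) = ((P.coeff i : ℤ) : ℂ) from rfl,
        Complex.norm_intCast]
      exact coeff_abs_le P i
    have h2 : ‖r‖ ^ i ≤ max 1 (‖r‖) ^ d := by
      calc ‖r‖ ^ i ≤ max 1 (‖r‖) ^ i :=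
            pow_le_pow_left₀ (norm_nonneg r) (le_max_right _ _) i
        _ ≤ max 1 (‖r‖) ^ d :=
            pow_le_pow_right₀ (le_max_left _ _)
              (by rw [Finset.mem_range, hdeg] at hi; omega)
    exact mul_le_mul h1 h2 (pow_nonneg (norm_nonneg r) i) (Nat.cast_nonneg _)
  refine (Finset.sum_le_sum hterm).trans ?_
  rw [Finset.sum_const, Finset.card_range, nsmul_eq_mul]
  have hcount : (((P.map (Int.castRingHom ℂ)).natDegree + 1 : ℕ) : ℝ) ≤ (d : ℝ) + 1 := by
    rw [hdeg]
    push_cast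
    have : (P.natDegree : ℝ) ≤ (d : ℝ) := by exact_mod_cast hd
    linarith
  have hnn : 0 ≤ (polyHeightZ P : ℝ) * max 1 (‖r‖) ^ d := by positivity
  calc (((P.map (Int.castRingHom ℂ)).natDegree + 1 : ℕ) : ℝ) *
        ((polyHeightZ P : ℝ) * max 1 (‖r‖) ^ d)
      ≤ ((d : ℝ) + 1) * ((polyHeightZ P : ℝ) * max 1 (‖r‖) ^ d) :=
        mul_le_mul_of_nonneg_right hcount hnn
    _ = ((d : ℝ) + 1) * (polyHeightZ P : ℝ) * max 1 (‖r‖) ^ d := by ring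


end LiouAux

set_option maxHeartbeats 2000000 in
open LiouAux in
/-- Liouville's inequality for an algebraic number `α` of degree `D` with absolute
logarithmic Weil height `h` (expressed via the Mahler measure of the primitive
integer minimal polynomial `q` of `α`). -/
theorem liouville_algebraic (α : ℂ) (D : ℕ) (hD : 0 < D)
    (q : Polynomial ℤ) (hq0 : q ≠ 0) (hqprim : q.IsPrimitive)
    (hqroot : Polynomial.aeval α q = 0)
    (hqdeg : q.natDegree = D)
    (hqmin : ∀ q' : Polynomial ℤ, q' ≠ 0 → Polynomial.aeval α q' = 0 → D ≤ q'.natDegree)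
    (h : ℝ)
    (hdef : h = (D : ℝ)⁻¹ * Real.log (mahlerMeasureC (q.map (Int.castRingHom ℂ))))
    (P : Polynomial ℤ) (hP : P ≠ 0) (d : ℕ) (hd : P.natDegree = d)
    (hPα : Polynomial.aeval α P ≠ 0) :
    Real.log (‖Polynomial.aeval α P‖) ≥
      -(D : ℝ) * d * h - ((D : ℝ) - 1) * Real.log (polyHeightZ P)
        - (D : ℝ) * Real.log (d + 1) := by
  have hqC0 : q.map (Int.castRingHom ℂ) ≠ 0 :=
    (Polynomial.map_ne_zero_iff intCast_injective').mpr hq0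
  set qC := q.map (Int.castRingHom ℂ) with hqC
  have hdegC : qC.natDegree = D := by
    rw [hqC, Polynomial.natDegree_map_eq_of_injective intCast_injective', hqdeg]
  have hcard : Multiset.card qC.roots = D := by
    rw [← hdegC]
    exact Polynomial.splits_iff_card_roots.mp (IsAlgClosed.splits qC)
  have hαmem : α ∈ qC.roots := by
    rw [Polynomial.mem_roots']
    refine ⟨hqC0, ?_⟩
    rw [Polynomial.IsRoot, hqC, ← Polynomial.eval₂_eq_eval_map, ← algebraMap_int_eq,
      ← Polynomial.aeval_def, hqroot]
  obtain ⟨R', hR'⟩ := Multiset.exists_cons_of_mem hαmem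
  have hcardR' : Multiset.card R' = D - 1 := by
    rw [hR', Multiset.card_cons] at hcard
    omega
  obtain ⟨m, hm⟩ := key_int D d q P hq0 hqdeg (le_of_eq hd)
  have hnon := roots_nonvanish α D hD q hq0 hqroot hqdeg hqmin P hPα
  have ha0 : q.leadingCoeff ≠ 0 := Polynomial.leadingCoeff_ne_zero.mpr hq0
  have hprod0 : ((qC.roots.map fun r => Polynomial.aeval r P)).prod ≠ 0 := by
    apply Multiset.prod_ne_zero
    intro h0
    obtain ⟨r, hr, hr0⟩ := Multiset.mem_map.mp h0
    exact hnon r hr hr0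
  have hm0 : m ≠ 0 := by
    rintro rfl
    rw [Int.cast_zero] at hm
    exact (mul_ne_zero (pow_ne_zero d (by exact_mod_cast ha0)) hprod0) hm.symm
  set H : ℝ := (polyHeightZ P : ℝ) with hH
  set A : ℝ := ‖((q.leadingCoeff : ℤ) : ℂ)‖ with hA
  set Mm : ℝ := mahlerMeasureC qC with hMm
  have hA1 : 1 ≤ A := by
    rw [hA, Complex.norm_intCast]
    have h1 : (1 : ℤ) ≤ |q.leadingCoeff| := Int.one_le_abs ha0
    calc (1:ℝ) ≤ (|q.leadingCoeff| : ℝ) := by exact_mod_cast h1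
      _ = |((q.leadingCoeff : ℤ) : ℝ)| := by push_cast; ring
  have hH1 : 1 ≤ H := by
    rw [hH]
    exact_mod_cast one_le_polyHeight P hP
  have h1m : (1 : ℝ) ≤ ‖((m : ℤ) : ℂ)‖ := by
    rw [Complex.norm_intCast]
    have h1 : (1:ℤ) ≤ |m| := Int.one_le_abs hm0
    calc (1:ℝ) ≤ (|m| : ℝ) := by exact_mod_cast h1
      _ = |((m : ℤ) : ℝ)| := by push_cast; ring
  -- compute |m|
  have habs : ‖((m : ℤ) : ℂ)‖ =
      A ^ d * (‖Polynomial.aeval α P‖ *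
        (R'.map fun r => ‖Polynomial.aeval r P‖).prod) := by
    rw [hm, norm_mul, norm_pow, hR', Multiset.map_cons, Multiset.prod_cons, norm_mul,
      show ‖(Multiset.map (fun r => Polynomial.aeval r P) R').prod‖
        = ((R'.map fun r => Polynomial.aeval r P).map (normHom : ℂ →*₀ ℝ)).prod from
        map_multiset_prod (normHom : ℂ →*₀ ℝ) _, Multiset.map_map]
    rfl
  -- bound the R' factor
  have hRbound : (R'.map fun r => ‖Polynomial.aeval r P‖).prod ≤
      (((d : ℝ) + 1) * H) ^ (D - 1) * (R'.map fun r => max 1 (‖r‖) ^ d).prod := by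
    calc (R'.map fun r => ‖Polynomial.aeval r P‖).prod
        ≤ (R'.map fun r => ((d : ℝ) + 1) * H * max 1 (‖r‖) ^ d).prod :=
          ms_prod_le_prod R' _ _ (fun x _ => norm_nonneg _)
            (fun x _ => aeval_abs_le P d (le_of_eq hd) x)
      _ = (((d : ℝ) + 1) * H) ^ (D - 1) * (R'.map fun r => max 1 (‖r‖) ^ d).prod := by
          rw [show (fun r : ℂ => ((d : ℝ) + 1) * H * max 1 (‖r‖) ^ d)
              = fun r : ℂ => (fun _ : ℂ => ((d : ℝ) + 1) * H) r *
                (fun r : ℂ => max 1 (‖r‖) ^ d) r from rfl,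
            Multiset.prod_map_mul, Multiset.map_const', Multiset.prod_replicate, hcardR']
  have hmaxR'_nonneg : ∀ x ∈ R'.map fun r => max 1 (‖r‖), (0:ℝ) ≤ x := by
    intro x hx
    obtain ⟨y, hy, rfl⟩ := Multiset.mem_map.mp hx
    positivity
  have hMahler : A * (R'.map fun r => max 1 (‖r‖)).prod ≤ Mm := by
    rw [hMm, mahlerMeasureC]
    have hlead : ‖qC.leadingCoeff‖ = A := by
      rw [hA]
      congr 1
      rw [Polynomial.leadingCoeff, hdegC, ← hqdeg, hqC, Polynomial.coeff_map]
      rfl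
    rw [hlead, hR', Multiset.map_cons, Multiset.prod_cons, ← mul_assoc, mul_comm A _, mul_assoc]
    have hp0 : 0 ≤ (R'.map fun r => max 1 (‖r‖)).prod :=
      ms_prod_nonneg _ hmaxR'_nonneg
    have h1α : 1 ≤ max 1 (‖α‖) := le_max_left _ _
    nlinarith [mul_nonneg (le_trans zero_le_one hA1 : (0:ℝ) ≤ A) hp0]
  have hMm1 : 1 ≤ Mm := by
    refine le_trans ?_ hMahler
    have : 1 ≤ (R'.map fun r => max 1 (‖r‖)).prod := by
      apply ms_one_le_prod
      intro x hx
      obtain ⟨y, hy, rfl⟩ := Multiset.mem_map.mp hx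
      exact le_max_left _ _
    nlinarith
  have hpow : A ^ d * (R'.map fun r => max 1 (‖r‖) ^ d).prod ≤ Mm ^ d := by
    have heq : A ^ d * (R'.map fun r => max 1 (‖r‖) ^ d).prod
        = (A * (R'.map fun r => max 1 (‖r‖)).prod) ^ d := by
      rw [mul_pow]
      congr 1
      rw [← Multiset.prod_map_pow]
    rw [heq]
    refine pow_le_pow_left₀ ?_ hMahler d
    exact mul_nonneg (le_trans zero_le_one hA1) (ms_prod_nonneg _ hmaxR'_nonneg)
  -- main chain
  set X : ℝ := ‖Polynomial.aeval α P‖ with hX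
  have hX0 : 0 < X := by
    rw [hX]
    exact norm_pos_iff.mpr hPα
  have hchain : 1 ≤ X * ((((d : ℝ) + 1) * H) ^ (D - 1) * Mm ^ d) := by
    have hprodabs_nonneg : 0 ≤ (R'.map fun r => ‖Polynomial.aeval r P‖).prod := by
      apply ms_prod_nonneg
      intro x hx
      obtain ⟨y, hy, rfl⟩ := Multiset.mem_map.mp hx
      exact norm_nonneg _
    have hAd : (0:ℝ) ≤ A ^ d := pow_nonneg (le_trans zero_le_one hA1) d
    calc (1:ℝ) ≤ ‖((m : ℤ) : ℂ)‖ := h1m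
      _ = A ^ d * (X * (R'.map fun r => ‖Polynomial.aeval r P‖).prod) := habs
      _ ≤ A ^ d * (X * ((((d : ℝ) + 1) * H) ^ (D - 1) *
            (R'.map fun r => max 1 (‖r‖) ^ d).prod)) := by
          apply mul_le_mul_of_nonneg_left _ hAd
          exact mul_le_mul_of_nonneg_left hRbound (le_of_lt hX0)
      _ = X * ((((d : ℝ) + 1) * H) ^ (D - 1) *
            (A ^ d * (R'.map fun r => max 1 (‖r‖) ^ d).prod)) := by ring
      _ ≤ X * ((((d : ℝ) + 1) * H) ^ (D - 1) * Mm ^ d) := by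
          apply mul_le_mul_of_nonneg_left _ (le_of_lt hX0)
          apply mul_le_mul_of_nonneg_left hpow
          positivity
  -- logarithms
  have hdH : (0:ℝ) < ((d : ℝ) + 1) * H := by
    have : (0:ℝ) ≤ (d : ℝ) := Nat.cast_nonneg d
    nlinarith
  have hMm0 : (0:ℝ) < Mm := lt_of_lt_of_le one_pos hMm1
  have hB1 : (0:ℝ) < (((d : ℝ) + 1) * H) ^ (D - 1) := by positivity
  have hB2 : (0:ℝ) < Mm ^ d := by positivity
  have hlog0 : 0 ≤ Real.log X + ((D - 1 : ℕ) : ℝ) * Real.log (((d : ℝ) + 1) * H)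
      + (d : ℝ) * Real.log Mm := by
    have h0 := Real.log_nonneg hchain
    rw [Real.log_mul (ne_of_gt hX0) (by positivity), Real.log_mul (ne_of_gt hB1) (ne_of_gt hB2),
      Real.log_pow, Real.log_pow] at h0
    linarith
  have hsplit : Real.log (((d : ℝ) + 1) * H) = Real.log ((d : ℝ) + 1) + Real.log H :=
    Real.log_mul (by positivity) (by linarith)
  have hcst : ((D - 1 : ℕ) : ℝ) = (D : ℝ) - 1 := by
    have h1 : (1:ℕ) ≤ D := hD
    push_cast [h1]
    ring
  have hlogd : 0 ≤ Real.log ((d : ℝ) + 1) := by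
    apply Real.log_nonneg
    have : (0:ℝ) ≤ (d : ℝ) := Nat.cast_nonneg d
    linarith
  have hlogH : 0 ≤ Real.log H := Real.log_nonneg hH1
  have hDne : (D : ℝ) ≠ 0 := Nat.cast_ne_zero.mpr (by omega)
  have hDh : (D : ℝ) * (d : ℝ) * h = (d : ℝ) * Real.log Mm := by
    rw [hdef]
    field_simp
  have hlog0' : 0 ≤ Real.log X + ((D : ℝ) - 1) * Real.log ((d : ℝ) + 1)
      + ((D : ℝ) - 1) * Real.log H + (d : ℝ) * Real.log Mm := by
    rw [hcst, hsplit] at hlog0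
    linarith [hlog0]
  have hext : ((D : ℝ) - 1) * Real.log ((d : ℝ) + 1) ≤ (D : ℝ) * Real.log ((d : ℝ) + 1) := by
    nlinarith [hlogd]
  rw [ge_iff_le]
  linarith [hlog0', hext, hDh, hlogd]
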